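/- Characterization of Υ_l via systems of paths (Proposition 3.5.2): for any conjugacy classes C₁,…,C_l in G, Υ_l(C₁,…,C_l) equals the infimum, over all systems of paths a = (a₁,…,a_l) with a₁(0)·…·a_l(0) = 1 and aᵢ(1) ∈ Cᵢ for i = 1,…,l, of the total length of the system, length(a) = Σᵢ Var(aᵢ), where Var(aᵢ) is the total variation of the map aᵢ : [0,1] → G with respect to the pseudometric ρ (i.e. the supremum over finite partitions 0 = t₀ ≤ t₁ ≤ … ≤ t_k = 1 of Σⱼ ρ(aᵢ(t_{j−1}), aᵢ(t_j))); the equality holds as an equality in [0, ∞]. -/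

import Mathlib

open scoped ENNReal

/-- The total variation (with respect to the pseudometric `ρ`) of a path `a : [0,1] → G`,
i.e. the supremum over finite partitions `0 = t₀ ≤ t₁ ≤ … ≤ t_k = 1` of
`Σⱼ ρ (a t_{j−1}) (a t_j)`, as a value in `[0, ∞]`. -/
noncomputable def pathVariation {G : Type*} (ρ : G → G → ℝ) (a : ℝ → G) : ℝ≥0∞ :=
  sSup {v : ℝ≥0∞ | ∃ (k : ℕ) (t : Fin (k + 1) → ℝ),
    Monotone t ∧ t 0 = 0 ∧ t (Fin.last k) = 1 ∧
    v = ∑ j : Fin k, ENNReal.ofReal (ρ (a (t j.castSucc)) (a (t j.succ)))}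

lemma dist_le_pathVariation {G : Type*} (ρ : G → G → ℝ) (a : ℝ → G) :
    ENNReal.ofReal (ρ (a 0) (a 1)) ≤ pathVariation ρ a := by
  apply le_sSup
  refine ⟨1, fun j => ((j : ℕ) : ℝ), ?_, ?_, ?_, ?_⟩
  · intro i j h
    exact_mod_cast Nat.cast_le.mpr h
  · simp
  · simp [Fin.last]
  · simp [Fin.sum_univ_one]

lemma pathVariation_const {G : Type*} (ρ : G → G → ℝ) (hrefl : ∀ x, ρ x x = 0) (c : G) :
    pathVariation ρ (fun _ => c) = 0 := by
  refine le_antisymm (sSup_le ?_) zero_le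
  rintro w ⟨k, t, hmono, h0, h1, rfl⟩
  simp [hrefl]

lemma pathVariation_step {G : Type*} (ρ : G → G → ℝ) (hrefl : ∀ x, ρ x x = 0) (u v : G) :
    pathVariation ρ (fun t => if t ≤ (0 : ℝ) then u else v) ≤ ENNReal.ofReal (ρ u v) := by
  apply sSup_le
  rintro w ⟨k, t, hmono, h0, h1, rfl⟩
  have key : ∀ j : Fin k, ¬(t j.castSucc ≤ 0 ∧ ¬ t j.succ ≤ 0) →
      ENNReal.ofReal (ρ ((fun s => if s ≤ (0:ℝ) then u else v) (t j.castSucc))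
        ((fun s => if s ≤ (0:ℝ) then u else v) (t j.succ))) = 0 := by
    intro j hj
    by_cases ha : t j.castSucc ≤ 0
    · have hb : t j.succ ≤ 0 := by tauto
      simp [ha, hb, hrefl]
    · have hb : ¬ t j.succ ≤ 0 := fun h => ha (le_trans (hmono (Fin.castSucc_le_succ j)) h)
      simp [ha, hb, hrefl]
  by_cases hex : ∃ j : Fin k, t j.castSucc ≤ 0 ∧ ¬ t j.succ ≤ 0
  · obtain ⟨j0, hj0⟩ := hex
    have huniq : ∀ j : Fin k, j ≠ j0 → ¬(t j.castSucc ≤ 0 ∧ ¬ t j.succ ≤ 0) := by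
      rintro j hne ⟨hja, hjb⟩
      rcases lt_or_gt_of_ne hne with h | h
      · exact hjb (le_trans (hmono (show j.succ ≤ j0.castSucc by
          simp only [Fin.lt_def] at h
          simp only [Fin.le_def, Fin.val_succ, Fin.coe_castSucc]
          omega)) hj0.1)
      · exact hj0.2 (le_trans (hmono (show j0.succ ≤ j.castSucc by
          simp only [Fin.lt_def] at h
          simp only [Fin.le_def, Fin.val_succ, Fin.coe_castSucc]
          omega)) hja)
    rw [Finset.sum_eq_single j0 (fun j _ hne => key j (huniq j hne)) (by simp)]
    simp [hj0.1, hj0.2]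
  · push_neg at hex
    rw [Finset.sum_eq_zero (fun j _ => key j (by tauto))]
    exact zero_le

lemma prod_rho_le {G : Type*} [Group G] (ρ : G → G → ℝ)
    (hrefl : ∀ x, ρ x x = 0)
    (hbi : ∀ g h x y, ρ (g * x * h) (g * y * h) = ρ x y)
    (htri : ∀ x y z, ρ x z ≤ ρ x y + ρ y z) :
    ∀ (l : ℕ) (u v : Fin l → G),
      ρ (List.ofFn u).prod (List.ofFn v).prod ≤ ∑ i, ρ (u i) (v i) := by
  intro l
  induction l with
  | zero => intro u v; simp [hrefl]
  | succ n ih =>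
    intro u v
    rw [List.ofFn_succ, List.ofFn_succ, List.prod_cons, List.prod_cons, Fin.sum_univ_succ]
    set Ru := (List.ofFn (fun i : Fin n => u i.succ)).prod
    set Rv := (List.ofFn (fun i : Fin n => v i.succ)).prod
    have h1 : ρ (u 0 * Ru) (v 0 * Ru) = ρ (u 0) (v 0) := by
      have := hbi 1 Ru (u 0) (v 0); simpa using this
    have h2 : ρ (v 0 * Ru) (v 0 * Rv) = ρ Ru Rv := by
      have := hbi (v 0) 1 Ru Rv; simpa using this
    calc ρ (u 0 * Ru) (v 0 * Rv) ≤ ρ (u 0 * Ru) (v 0 * Ru) + ρ (v 0 * Ru) (v 0 * Rv) :=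
          htri _ _ _
      _ = ρ (u 0) (v 0) + ρ Ru Rv := by rw [h1, h2]
      _ ≤ ρ (u 0) (v 0) + ∑ i : Fin n, ρ (u i.succ) (v i.succ) := by
          exact add_le_add_right (ih _ _) _

/-- Proposition 3.5.2: `Υ_l (C₁, …, C_l)` equals the infimum, over all systems
of paths `a = (a₁, …, a_l)` with `a₁(0) ⬝ … ⬝ a_l(0) = 1` and `aᵢ(1) ∈ Cᵢ`, of the total
length `Σᵢ Var(aᵢ)`, as an equality in `[0, ∞]`. -/
theorem upsilon_eq_inf_length_of_systems_of_paths
    {G : Type*} [Group G] (ρ : G → G → ℝ)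
    (hrefl : ∀ x, ρ x x = 0)
    (hsymm : ∀ x y, ρ x y = ρ y x)
    (hnonneg : ∀ x y, 0 ≤ ρ x y)
    (htri : ∀ x y z, ρ x z ≤ ρ x y + ρ y z)
    (hbi : ∀ g h x y, ρ (g * x * h) (g * y * h) = ρ x y)
    {l : ℕ} (g : Fin l → G) :
    sInf {r : ℝ≥0∞ | ∃ φ : Fin l → G,
        (∀ i, ∃ x : G, φ i = x * g i * x⁻¹) ∧
          r = ENNReal.ofReal (ρ 1 (List.ofFn φ).prod)} =
      sInf {L : ℝ≥0∞ | ∃ a : Fin l → ℝ → G,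
        (List.ofFn (fun i => a i 0)).prod = 1 ∧
          (∀ i, ∃ x : G, a i 1 = x * g i * x⁻¹) ∧
          L = ∑ i : Fin l, pathVariation ρ (a i)} := by
  apply le_antisymm
  · -- LHS ≤ RHS : from a system of paths, take the endpoints
    apply le_sInf
    rintro L ⟨a, hprod, hconj, rfl⟩
    refine sInf_le_of_le ⟨fun i => a i 1, hconj, rfl⟩ ?_
    have h1 : ρ 1 (List.ofFn (fun i => a i 1)).prod ≤ ∑ i, ρ (a i 0) (a i 1) := by
      calc ρ 1 (List.ofFn (fun i => a i 1)).prod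
          = ρ (List.ofFn (fun i => a i 0)).prod (List.ofFn (fun i => a i 1)).prod := by
            rw [hprod]
        _ ≤ ∑ i, ρ (a i 0) (a i 1) := prod_rho_le ρ hrefl hbi htri l _ _
    calc ENNReal.ofReal (ρ 1 (List.ofFn (fun i => a i 1)).prod)
        ≤ ENNReal.ofReal (∑ i, ρ (a i 0) (a i 1)) := ENNReal.ofReal_le_ofReal h1
      _ = ∑ i, ENNReal.ofReal (ρ (a i 0) (a i 1)) :=
          ENNReal.ofReal_sum_of_nonneg (fun i _ => hnonneg _ _)
      _ ≤ ∑ i, pathVariation ρ (a i) :=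
          Finset.sum_le_sum (fun i _ => dist_le_pathVariation ρ (a i))
  · -- RHS ≤ LHS : from φ, build a system of paths of the same length
    apply le_sInf
    rintro r ⟨φ, hφ, rfl⟩
    match l, g, φ, hφ with
    | 0, g, φ, hφ =>
      refine sInf_le_of_le ⟨fun i _ => 1, by simp, by exact fun i => i.elim0, rfl⟩ ?_
      simp
    | (j+1), g, φ, hφ =>
      set P := (List.ofFn φ).prod with hPdef
      set a : Fin (j+1) → ℝ → G :=
        fun i t => if i = 0 then (if t ≤ 0 then P⁻¹ * φ 0 else φ 0) else φ i with ha
      have ha0 : a 0 = fun t => if t ≤ (0:ℝ) then P⁻¹ * φ 0 else φ 0 := by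
        funext t; simp [ha]
      have hasucc : ∀ i : Fin j, a i.succ = fun _ => φ i.succ := by
        intro i; funext t; simp [ha, Fin.succ_ne_zero]
      have hprod : (List.ofFn (fun i => a i 0)).prod = 1 := by
        rw [List.ofFn_succ, List.prod_cons]
        have : (fun i : Fin j => a i.succ 0) = fun i : Fin j => φ i.succ := by
          funext i; rw [hasucc]
        rw [this]
        have hP : P = φ 0 * (List.ofFn (fun i : Fin j => φ i.succ)).prod := by
          rw [hPdef, List.ofFn_succ, List.prod_cons]
        have ha00 : a 0 0 = P⁻¹ * φ 0 := by rw [ha0]; simp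
        rw [ha00, mul_assoc, ← hP, inv_mul_cancel]
      have hend : ∀ i, ∃ x : G, a i 1 = x * g i * x⁻¹ := by
        intro i
        have : a i 1 = φ i := by
          rcases Fin.eq_zero_or_eq_succ i with h | ⟨i', rfl⟩
          · subst h; rw [ha0]; norm_num
          · rw [hasucc]
        rw [this]; exact hφ i
      refine sInf_le_of_le ⟨a, hprod, hend, rfl⟩ ?_
      rw [Fin.sum_univ_succ]
      have htail : ∑ i : Fin j, pathVariation ρ (a i.succ) = 0 := by
        apply Finset.sum_eq_zero
        intro i _
        rw [hasucc i, pathVariation_const ρ hrefl]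
      rw [htail, add_zero, ha0]
      refine le_trans (pathVariation_step ρ hrefl _ _) ?_
      have : ρ (P⁻¹ * φ 0) (φ 0) = ρ 1 P := by
        have := hbi P (φ 0)⁻¹ (P⁻¹ * φ 0) (φ 0)
        rw [show P * (P⁻¹ * φ 0) * (φ 0)⁻¹ = 1 by group,
            show P * φ 0 * (φ 0)⁻¹ = P by group] at this
        rw [← this]
      rw [this]
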